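/- Define ρ : ℂ² → ℝ near (1,1) by ρ(z₁,z₂) = log|z₁| + log|z₂| + (log|z₁| − log|z₂|)⁴. Then along the complex line φ(ζ) = (1 + aζ, 1 + bζ) through (1,1) with (a,b) ≠ (0,0), the order of vanishing of ρ ∘ φ at ζ = 0 is at most 2; while along the analytic disc ψ(ζ) = (e^{ζ}, e^{−ζ}) one has ρ ∘ ψ(ζ) = 16·(Re ζ)⁴, whose order of vanishing at 0 is 4. -/

import Mathlib

/-- The defining function `ρ(z₁,z₂) = log|z₁| + log|z₂| + (log|z₁| − log|z₂|)⁴`. -/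
noncomputable def rho11 (z₁ z₂ : ℂ) : ℝ :=
  Real.log (‖z₁‖) + Real.log (‖z₂‖) +
    (Real.log (‖z₁‖) - Real.log (‖z₂‖)) ^ 4

open Filter Topology Complex

lemma logabs_hasDeriv (c : ℂ) :
    HasDerivAt (fun t : ℝ => Real.log (‖1 + c * ↑t‖)) c.re 0 := by
  have h1 : HasDerivAt (fun z : ℂ => 1 + c * z) c 0 := by
    simpa using ((hasDerivAt_id (0 : ℂ)).const_mul c).const_add 1
  have h2 : HasDerivAt Complex.log 1⁻¹ (1 + c * 0) := by
    have := Complex.hasDerivAt_log (show (1:ℂ) ∈ Complex.slitPlane by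
      simp [Complex.mem_slitPlane_iff])
    simpa using this
  have h3 : HasDerivAt (fun z : ℂ => Complex.log (1 + c * z)) c 0 := by
    simpa using h1.clog (by simp)
  have h4 : HasDerivAt (fun t : ℝ => (Complex.log (1 + c * ↑t)).re) c.re 0 := by
    have := HasDerivAt.real_of_complex (z := 0) (by simpa using h3)
    simpa using this
  simpa [Complex.log_re] using h4

lemma key_real (r : ℝ) (h0 : 0 < r) (h13 : r ≤ 1/13) :
    Real.log (1+r) + Real.log (1-r) + (Real.log (1+r) - Real.log (1-r))^4 ≤ -(r^2/2) := by
  have hr1 : r < 1/2 := by linarith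
  have hp : (0:ℝ) < 1 + r := by linarith
  have hm : (0:ℝ) < 1 - r := by linarith
  have h1 : Real.log (1+r) + Real.log (1-r) = Real.log (1 - r^2) := by
    rw [← Real.log_mul (ne_of_gt hp) (ne_of_gt hm)]; ring_nf
  have h2 : Real.log (1 - r^2) ≤ -r^2 := by
    have := Real.log_le_sub_one_of_pos (show (0:ℝ) < 1 - r^2 by nlinarith)
    linarith
  have hup : Real.log (1+r) ≤ r := by
    have := Real.log_le_sub_one_of_pos hp; linarith
  have hdn : -Real.log (1-r) ≤ 2*r := by
    have hinv : Real.log (1-r)⁻¹ ≤ (1-r)⁻¹ - 1 :=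
      Real.log_le_sub_one_of_pos (by positivity)
    have h2r : (1-r)⁻¹ ≤ 1 + 2*r := by
      rw [inv_le_iff_one_le_mul₀ hm]; nlinarith
    rw [Real.log_inv] at hinv; linarith
  have hL0 : 0 ≤ Real.log (1+r) - Real.log (1-r) := by
    have := Real.log_le_log hm (by linarith : 1 - r ≤ 1 + r); linarith
  have hL : Real.log (1+r) - Real.log (1-r) ≤ 3*r := by linarith
  have hL4 : (Real.log (1+r) - Real.log (1-r))^4 ≤ (3*r)^4 :=
    pow_le_pow_left₀ hL0 hL 4
  have hsq : r^2 ≤ 1/169 := by nlinarith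
  have : (3*r)^4 ≤ r^2/2 := by
    nlinarith [mul_le_mul_of_nonneg_left hsq (sq_nonneg r), sq_nonneg r]
  linarith

theorem stmt_11 :
    (∀ ζ : ℂ, rho11 (Complex.exp ζ) (Complex.exp (-ζ)) = 16 * ζ.re ^ 4) ∧
    (∀ a b : ℂ, (a, b) ≠ (0, 0) →
      ¬ ∃ C : ℝ, ∀ᶠ ζ in nhds (0 : ℂ),
        |rho11 (1 + a * ζ) (1 + b * ζ)| ≤ C * ‖ζ‖ ^ 3) := by
  constructor
  · intro ζ
    simp only [rho11, Complex.norm_exp, Real.log_exp, Complex.neg_re]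
    ring
  · rintro a b hab ⟨C, H⟩
    -- Step A: a + b = 0
    have hab0 : a + b = 0 := by
      by_contra hne
      set w : ℂ := starRingEnd ℂ (a + b) with hw_def
      have hwc : Continuous fun t : ℝ => (↑t : ℂ) * w := by continuity
      have hw : Tendsto (fun t : ℝ => (↑t : ℂ) * w) (𝓝 0) (𝓝 0) := by
        simpa using hwc.tendsto 0
      have H2 := hw.eventually H
      set f : ℝ → ℝ := fun t =>
        Real.log (‖1 + a * w * ↑t‖) + Real.log (‖1 + b * w * ↑t‖) +
          (Real.log (‖1 + a * w * ↑t‖) - Real.log (‖1 + b * w * ↑t‖))^4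
        with hf_def
      have hfa := logabs_hasDeriv (a * w)
      have hfb := logabs_hasDeriv (b * w)
      have hq := ((hfa.sub hfb).pow 4)
      have hf : HasDerivAt f (((a+b) * w).re) 0 := by
        have h := (hfa.add hfb).add hq
        refine h.congr_deriv ?_
        have e1 : ‖1 + a * w * ((0:ℝ):ℂ)‖ = 1 := by simp
        have e2 : ‖1 + b * w * ((0:ℝ):ℂ)‖ = 1 := by simp
        simp only [Pi.sub_apply, e1, e2]
        simp [add_mul, Complex.add_re]
      have h0 : f 0 = 0 := by simp [hf_def]
      have hs1 : Tendsto (slope f 0) (𝓝[≠] 0) (𝓝 (((a+b) * w).re)) :=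
        hasDerivAt_iff_tendsto_slope.mp hf
      have hbd : ∀ᶠ t in 𝓝[≠] (0:ℝ), ‖slope f 0 t‖ ≤ |C| * ‖w‖ ^ 3 * t ^ 2 := by
        filter_upwards [eventually_nhdsWithin_of_eventually_nhds H2,
          self_mem_nhdsWithin] with t ht ht0
        have ht0' : (t : ℝ) ≠ 0 := ht0
        have hfe : rho11 (1 + a * (↑t * w)) (1 + b * (↑t * w)) = f t := by
          simp only [rho11, hf_def]
          ring_nf
        rw [hfe] at ht
        have habs : ‖(t : ℂ) * w‖ = |t| * ‖w‖ := by
          simp [Complex.norm_real]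
        rw [habs] at ht
        have : ‖slope f 0 t‖ = |f t| / |t| := by
          rw [slope_def_field]
          simp [h0, abs_div]
        rw [this]
        rw [div_le_iff₀ (abs_pos.mpr ht0')]
        calc |f t| ≤ C * (|t| * ‖w‖) ^ 3 := ht
          _ ≤ |C| * ‖w‖ ^ 3 * t ^ 2 * |t| := by
              have ht2 : |t|^3 = t^2 * |t| := by rw [pow_succ, _root_.sq_abs]
              have h3 : (|t| * ‖w‖) ^ 3 = t^2 * |t| * ‖w‖ ^ 3 := by
                rw [mul_pow, ht2]
              rw [h3]
              have hXnn : (0:ℝ) ≤ t ^ 2 * |t| * ‖w‖ ^ 3 := by positivity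
              have h4 := mul_le_mul_of_nonneg_right (le_abs_self C) hXnn
              calc C * (t ^ 2 * |t| * ‖w‖ ^ 3)
                  ≤ |C| * (t ^ 2 * |t| * ‖w‖ ^ 3) := h4
                _ = |C| * ‖w‖ ^ 3 * t ^ 2 * |t| := by ring
      have hs2 : Tendsto (slope f 0) (𝓝[≠] (0:ℝ)) (𝓝 0) := by
        apply squeeze_zero_norm' hbd
        have : Tendsto (fun t : ℝ => |C| * ‖w‖ ^ 3 * t ^ 2) (𝓝 0) (𝓝 0) := by
          have hcont : Continuous fun t : ℝ => |C| * ‖w‖ ^ 3 * t ^ 2 := by continuity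
          simpa using hcont.tendsto 0
        exact this.mono_left nhdsWithin_le_nhds
      have heq := tendsto_nhds_unique hs1 hs2
      rw [hw_def, Complex.mul_conj] at heq
      simp only [Complex.ofReal_re] at heq
      exact hne (Complex.normSq_eq_zero.mp heq)
    -- Step B
    have ha : a ≠ 0 := by
      intro h
      apply hab
      have : b = 0 := by rw [h, zero_add] at hab0; exact hab0
      simp [h, this]
    have hb : b = -a := by linear_combination hab0
    have hA : 0 < ‖a‖ := norm_pos_iff.mpr ha
    set ζf : ℝ → ℂ := fun s => ↑s * (starRingEnd ℂ a / ↑(‖a‖)) with hζdef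
    have hζc : Continuous ζf := by continuity
    have hζ : Tendsto ζf (𝓝[>] (0:ℝ)) (𝓝 0) := by
      have : Tendsto ζf (𝓝 0) (𝓝 0) := by simpa [hζdef] using hζc.tendsto 0
      exact this.mono_left nhdsWithin_le_nhds
    have H3 := hζ.eventually H
    have hsmall : ∀ᶠ s in 𝓝[>] (0:ℝ), ‖a‖ * s < 1/13 := by
      have ht : Tendsto (fun s : ℝ => ‖a‖ * s) (𝓝 0) (𝓝 0) := by
        have hc : Continuous fun s : ℝ => ‖a‖ * s := by fun_prop
        simpa using hc.tendsto (0:ℝ)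
      exact ((ht.eventually (eventually_lt_nhds (by norm_num : (0:ℝ) < 1/13)))).filter_mono
        nhdsWithin_le_nhds
    have key : ∀ᶠ s in 𝓝[>] (0:ℝ), ‖a‖ ^ 2 / 2 ≤ C * s := by
      filter_upwards [H3, hsmall, self_mem_nhdsWithin] with s hs hsm hs0
      have hs0' : (0:ℝ) < s := hs0
      set r : ℝ := ‖a‖ * s with hrdef
      have hr0 : 0 < r := by positivity
      have hr13 : r ≤ 1/13 := le_of_lt hsm
      have haz : a * ζf s = (r : ℂ) := by
        have hA' : ((‖a‖ : ℝ) : ℂ) ≠ 0 := by exact_mod_cast ne_of_gt hA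
        have h1 : a * ζf s = (↑s * (a * starRingEnd ℂ a)) / ↑(‖a‖) := by
          rw [hζdef]; ring
        rw [h1, Complex.mul_conj, Complex.normSq_eq_norm_sq, hrdef]
        push_cast
        field_simp
      have hbz : b * ζf s = -(r : ℂ) := by rw [hb]; rw [neg_mul, haz]
      have habsz : ‖ζf s‖ = s := by
        rw [hζdef]
        simp only [norm_mul, norm_div, Complex.norm_real, Complex.norm_conj, Real.norm_eq_abs]
        rw [abs_of_pos hA, div_self (ne_of_gt hA), abs_of_pos hs0', mul_one]
      have hval : rho11 (1 + a * ζf s) (1 + b * ζf s) =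
          Real.log (1+r) + Real.log (1-r) + (Real.log (1+r) - Real.log (1-r))^4 := by
        rw [haz, hbz]
        simp only [rho11]
        have e1 : (1 : ℂ) + (r:ℂ) = ((1 + r : ℝ) : ℂ) := by push_cast; ring
        have e2 : (1 : ℂ) + -(r:ℂ) = ((1 - r : ℝ) : ℂ) := by push_cast; ring
        rw [e1, e2, Complex.norm_real, Complex.norm_real, Real.norm_eq_abs, Real.norm_eq_abs,
          abs_of_pos (by linarith : (0:ℝ) < 1 + r),
          abs_of_pos (by linarith : (0:ℝ) < 1 - r)]
      rw [hval, habsz] at hs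
      have hneg := key_real r hr0 hr13
      have habs2 : |Real.log (1+r) + Real.log (1-r) + (Real.log (1+r) - Real.log (1-r))^4|
          ≥ r^2/2 := by
        rw [abs_of_nonpos (by nlinarith [sq_nonneg r, hneg])]
        linarith
      have : r^2/2 ≤ C * s^3 := le_trans habs2 hs
      have hr2 : r^2 = ‖a‖ ^2 * s^2 := by rw [hrdef]; ring
      rw [hr2] at this
      have hs2 : (0:ℝ) < s^2 := by positivity
      have h' : ‖a‖ ^ 2 / 2 * s^2 ≤ (C * s) * s^2 := by nlinarith [this]
      exact le_of_mul_le_mul_right h' hs2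
    have hC : Tendsto (fun s : ℝ => C * s) (𝓝[>] (0:ℝ)) (𝓝 0) := by
      have : Tendsto (fun s : ℝ => C * s) (𝓝 0) (𝓝 0) := by
        have hc : Continuous fun s : ℝ => C * s := by fun_prop
        simpa using hc.tendsto (0:ℝ)
      exact this.mono_left nhdsWithin_le_nhds
    have := ge_of_tendsto hC key
    nlinarith
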